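/- For every prime p > 3 and every n ≥ 1, the elementary abelian p-group G = (ℤ/pℤ)^n contains a sum-free set of cardinality at least 2p^{n−1}; consequently, a maximal sum-free set in G has cardinality strictly greater than p^{n−1}, so no maximal sum-free set in G is a coset of a maximal subgroup. -/

import Mathlib

open Pointwise

/-- A subset `S` of an additive group is sum-free if for all `s₁, s₂ ∈ S`, `s₁ + s₂ ∉ S`. -/
def AddSumFree {G : Type*} [AddGroup G] (S : Set G) : Prop :=
  ∀ a ∈ S, ∀ b ∈ S, a + b ∉ S

/-- A maximal sum-free set: a (nonempty) sum-free set of maximum cardinality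
among all sum-free subsets. -/
def IsMaxAddSumFree {G : Type*} [AddGroup G] (S : Set G) : Prop :=
  S.Nonempty ∧ AddSumFree S ∧ ∀ T : Set G, AddSumFree T → T.ncard ≤ S.ncard

/-- For prime `p > 3` and `n ≥ 1`, `(ℤ/pℤ)^n` has a sum-free set of cardinality at
least `2p^(n-1)`; hence maximal sum-free sets have cardinality greater than `p^(n-1)`
and are not cosets of maximal subgroups. -/
theorem no_analogue_for_p_gt_three (p : ℕ) (hp : p.Prime) (hp3 : 3 < p) (n : ℕ)
    (hn : 1 ≤ n) :
    (∃ S : Set (Fin n → ZMod p), AddSumFree S ∧ 2 * p ^ (n - 1) ≤ S.ncard) ∧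
      (∀ S : Set (Fin n → ZMod p), IsMaxAddSumFree S → p ^ (n - 1) < S.ncard) ∧
      (∀ S : Set (Fin n → ZMod p), IsMaxAddSumFree S →
        ¬∃ M : AddSubgroup (Fin n → ZMod p), IsCoatom M ∧
          ∃ x : Fin n → ZMod p, S = x +ᵥ (M : Set (Fin n → ZMod p))) := by
  obtain ⟨m, rfl⟩ : ∃ m, n = m + 1 := ⟨n - 1, (Nat.succ_pred_eq_of_pos hn).symm⟩
  haveI : Fact p.Prime := ⟨hp⟩
  have h1 : (1 : ZMod p) ≠ 0 := one_ne_zero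
  have h3 : (3 : ZMod p) ≠ 0 := by
    have hd : ¬ (p ∣ 3) := fun h => by have := Nat.le_of_dvd (by norm_num) h; omega
    exact_mod_cast (ZMod.natCast_eq_zero_iff 3 p).not.mpr hd
  -- {1, -1} is sum-free in ZMod p
  have hIsf : ∀ a b : ZMod p, (a = 1 ∨ a = -1) → (b = 1 ∨ b = -1) →
      ¬(a + b = 1 ∨ a + b = -1) := by
    rintro a b (rfl | rfl) (rfl | rfl) (h | h) <;>
      first
        | exact h1 (by linear_combination h)
        | exact h1 (by linear_combination -h)
        | exact h3 (by linear_combination h)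
        | exact h3 (by linear_combination -h)
  -- the sum-free set
  set S₀ : Set (Fin (m + 1) → ZMod p) := {x | x 0 = 1 ∨ x 0 = -1} with hS₀
  have hSF : AddSumFree S₀ := by
    intro a ha b hb hab
    exact hIsf (a 0) (b 0) ha hb hab
  -- cardinality of S₀
  have h2 : (2 : ZMod p) ≠ 0 := by
    have hd : ¬ (p ∣ 2) := fun h => by have := Nat.le_of_dvd (by norm_num) h; omega
    exact_mod_cast (ZMod.natCast_eq_zero_iff 2 p).not.mpr hd
  have hm1 : (1 : ZMod p) ≠ -1 := fun h => h2 (by linear_combination h)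
  have hcard : S₀.ncard = 2 * p ^ m := by
    set e : (Fin (m + 1) → ZMod p) ≃ ZMod p × (Fin m → ZMod p) :=
      (Fin.consEquiv (fun _ : Fin (m + 1) => ZMod p)).symm with he
    have himg : e '' S₀ = ({1, -1} : Set (ZMod p)) ×ˢ (Set.univ : Set (Fin m → ZMod p)) := by
      ext q
      constructor
      · rintro ⟨x, hx, rfl⟩
        obtain ⟨a, b, rfl⟩ : ∃ a b, x = Fin.cons a b := ⟨x 0, Fin.tail x, (Fin.cons_self_tail x).symm⟩
        simp only [he, Equiv.symm_apply_eq, Fin.consEquiv_apply]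
        constructor
        · simpa [hS₀] using hx
        · trivial
      · rintro ⟨ha, -⟩
        refine ⟨Fin.cons q.1 q.2, ?_, ?_⟩
        · simpa [hS₀] using ha
        · simp [he, Equiv.symm_apply_eq]
    have h1' : S₀.ncard = (e '' S₀).ncard := (Set.ncard_image_of_injective _ e.injective).symm
    rw [h1', himg, ← Nat.card_coe_set_eq]
    rw [Nat.card_congr (Equiv.Set.prod _ _), Nat.card_prod]
    rw [Nat.card_coe_set_eq, Nat.card_coe_set_eq, Set.ncard_pair hm1, Set.ncard_univ,
      Nat.card_fun]
    simp [Nat.card_zmod]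
  have hppow : 0 < p ^ m := Nat.pow_pos hp.pos
  refine ⟨⟨S₀, hSF, by simp [hcard]⟩, ?_, ?_⟩
  · intro S hS
    have := hS.2.2 S₀ hSF
    rw [hcard] at this
    calc p ^ (m + 1 - 1) = p ^ m := by simp
    _ < 2 * p ^ m := by omega
    _ ≤ S.ncard := this
  · rintro S hS ⟨M, hM, x, rfl⟩
    -- card of coset = Nat.card M ≤ p ^ m
    have hcoset : (x +ᵥ (M : Set (Fin (m + 1) → ZMod p))).ncard = Nat.card M := by
      rw [Set.ncard_vadd_set, ← Nat.card_coe_set_eq]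
      rfl
    have hdvd : Nat.card M ∣ Nat.card (Fin (m + 1) → ZMod p) :=
      AddSubgroup.card_addSubgroup_dvd_card M
    have hG : Nat.card (Fin (m + 1) → ZMod p) = p ^ (m + 1) := by
      rw [Nat.card_fun]
      simp [Nat.card_zmod]
    rw [hG] at hdvd
    obtain ⟨k, hk, hkeq⟩ := (Nat.dvd_prime_pow hp).mp hdvd
    have hne : M ≠ ⊤ := hM.1
    have hklt : k < m + 1 := by
      rcases lt_or_eq_of_le hk with h | rfl
      · exact h
      · exfalso
        apply hne
        apply AddSubgroup.eq_top_of_card_eq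
        rw [hkeq, hG]
    have hle : Nat.card M ≤ p ^ m :=
      hkeq ▸ Nat.pow_le_pow_right hp.pos (by omega)
    have hgt := (by
      have := hS.2.2 S₀ hSF
      rw [hcard] at this
      calc p ^ m < 2 * p ^ m := by omega
      _ ≤ (x +ᵥ (M : Set (Fin (m + 1) → ZMod p))).ncard := this : p ^ m <
        (x +ᵥ (M : Set (Fin (m + 1) → ZMod p))).ncard)
    rw [hcoset] at hgt
    omega
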